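/- arXiv:1210.0090 — 12 statements merged into one kernel-verified Lean document; each statement's English description precedes it below -/
import Mathlib

section
/- Let a, b, c : ℕ → ℝ be the sequences with a₀ = 1, b₀ = 0, c₀ = 0 and a_{n+1} = 3a_n³ + 6a_n²b_n, b_{n+1} = a_n³ + 7a_n²b_n + 7a_n b_n² + a_n²c_n, c_{n+1} = a_n³ + 12a_n²b_n + 36a_n b_n² + 14b_n³ + 3a_n²c_n + 12a_n b_n c_n, and define s_{n+1} = 16a_n³ + 72a_n²b_n + 78a_n b_n² + 14b_n³ + 9a_n²c_n + 12a_n b_n c_n. Then for every n ≥ 1, s_n = (1/4) · 3^{(3/4)(−1 + 3^{n−1} − 2(n−1))} · 5^{(1/4)(−3 + 3^n − 2(n−1))} · (3^n + 5^n)². -/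
lemma rpow_triple {x : ℝ} (hx : 0 < x) (q : ℝ) : x ^ (3 * q) = (x ^ q) ^ 3 := by
  rw [mul_comm, Real.rpow_mul hx.le, show (3:ℝ) = ((3:ℕ):ℝ) by norm_num,
    Real.rpow_natCast]

set_option maxHeartbeats 1000000 in
theorem apollonian_spanning_trees
    (a b c : ℕ → ℝ)
    (ha0 : a 0 = 1) (hb0 : b 0 = 0) (hc0 : c 0 = 0)
    (ha : ∀ n, a (n + 1) = 3 * (a n) ^ 3 + 6 * (a n) ^ 2 * b n)
    (hb : ∀ n, b (n + 1) = (a n) ^ 3 + 7 * (a n) ^ 2 * b n + 7 * a n * (b n) ^ 2 + (a n) ^ 2 * c n)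
    (hc : ∀ n, c (n + 1) = (a n) ^ 3 + 12 * (a n) ^ 2 * b n + 36 * a n * (b n) ^ 2 + 14 * (b n) ^ 3
        + 3 * (a n) ^ 2 * c n + 12 * a n * b n * c n)
    (s : ℕ → ℝ)
    (hs : ∀ n, s (n + 1) = 16 * (a n) ^ 3 + 72 * (a n) ^ 2 * b n + 78 * a n * (b n) ^ 2
        + 14 * (b n) ^ 3 + 9 * (a n) ^ 2 * c n + 12 * a n * b n * c n) :
    ∀ n : ℕ, 1 ≤ n →
      s n = (1 / 4) * (3 : ℝ) ^ ((3 / 4 : ℝ) * (-1 + (3 : ℝ) ^ (n - 1) - 2 * ((n : ℝ) - 1)))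
          * (5 : ℝ) ^ ((1 / 4 : ℝ) * (-3 + (3 : ℝ) ^ n - 2 * ((n : ℝ) - 1)))
          * ((3 : ℝ) ^ n + (5 : ℝ) ^ n) ^ 2 := by
  have h3 : (0:ℝ) < 3 := by norm_num
  have h5 : (0:ℝ) < 5 := by norm_num
  have key : ∀ n : ℕ,
      a n = (3:ℝ) ^ (((3:ℝ)^n + 2*(n:ℝ) - 1)/4) * (5:ℝ) ^ (((3:ℝ)^n - 2*(n:ℝ) - 1)/4) ∧
      b n = (3:ℝ) ^ (((3:ℝ)^n + 2*(n:ℝ) - 1)/4) * (5:ℝ) ^ (((3:ℝ)^n - 2*(n:ℝ) - 1)/4)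
            * (((5:ℝ)^n - (3:ℝ)^n)/(2*(3:ℝ)^n)) ∧
      c n = 3 * ((3:ℝ) ^ (((3:ℝ)^n + 2*(n:ℝ) - 1)/4) * (5:ℝ) ^ (((3:ℝ)^n - 2*(n:ℝ) - 1)/4))
            * (((5:ℝ)^n - (3:ℝ)^n)/(2*(3:ℝ)^n))^2 := by
    intro n
    induction n with
    | zero =>
      norm_num [ha0, hb0, hc0]
    | succ n ih =>
      obtain ⟨iha, ihb, ihc⟩ := ih
      have ht3 : ((3:ℝ)^n) ≠ 0 := by positivity
      have e3 : ((3:ℝ)^(n+1) + 2*((n+1:ℕ):ℝ) - 1)/4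
          = 3*(((3:ℝ)^n + 2*(n:ℝ) - 1)/4) + ((1:ℝ) - (n:ℝ)) := by
        push_cast [pow_succ]; ring
      have e5 : ((3:ℝ)^(n+1) - 2*((n+1:ℕ):ℝ) - 1)/4
          = 3*(((3:ℝ)^n - 2*(n:ℝ) - 1)/4) + (n:ℝ) := by
        push_cast [pow_succ]; ring
      have hx3 : (3:ℝ) ^ (((3:ℝ)^(n+1) + 2*((n+1:ℕ):ℝ) - 1)/4)
          = ((3:ℝ) ^ (((3:ℝ)^n + 2*(n:ℝ) - 1)/4))^3 * (3 / (3:ℝ)^n) := by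
        rw [e3, Real.rpow_add h3, rpow_triple h3, Real.rpow_sub h3, Real.rpow_one,
          Real.rpow_natCast]
      have hx5 : (5:ℝ) ^ (((3:ℝ)^(n+1) - 2*((n+1:ℕ):ℝ) - 1)/4)
          = ((5:ℝ) ^ (((3:ℝ)^n - 2*(n:ℝ) - 1)/4))^3 * (5:ℝ)^n := by
        rw [e5, Real.rpow_add h5, rpow_triple h5, Real.rpow_natCast]
      refine ⟨?_, ?_, ?_⟩
      · rw [ha n, iha, ihb, hx3, hx5]
        field_simp
        ring
      · rw [hb n, iha, ihb, ihc, hx3, hx5]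
        simp only [pow_succ]
        field_simp
        ring
      · rw [hc n, iha, ihb, ihc, hx3, hx5]
        simp only [pow_succ]
        field_simp
        ring
  intro n hn
  obtain ⟨m, rfl⟩ : ∃ m, n = m + 1 := ⟨n - 1, by omega⟩
  have ht3 : ((3:ℝ)^m) ≠ 0 := by positivity
  have hy3 : (3:ℝ) ^ ((3/4:ℝ) * (-1 + (3:ℝ)^(m + 1 - 1) - 2 * (((m+1:ℕ):ℝ) - 1)))
      = ((3:ℝ) ^ (((3:ℝ)^m + 2*(m:ℝ) - 1)/4))^3 / ((3:ℝ)^m)^3 := by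
    have e : (3/4:ℝ) * (-1 + (3:ℝ)^(m + 1 - 1) - 2 * (((m+1:ℕ):ℝ) - 1))
        = 3*(((3:ℝ)^m + 2*(m:ℝ) - 1)/4) - ((3*m:ℕ):ℝ) := by
      simp only [Nat.add_sub_cancel]
      push_cast; ring
    rw [e, Real.rpow_sub h3, rpow_triple h3, Real.rpow_natCast, mul_comm 3 m, pow_mul]
  have hy5 : (5:ℝ) ^ ((1/4:ℝ) * (-3 + (3:ℝ)^(m + 1) - 2 * (((m+1:ℕ):ℝ) - 1)))
      = ((5:ℝ) ^ (((3:ℝ)^m - 2*(m:ℝ) - 1)/4))^3 * (5:ℝ)^m := by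
    have e : (1/4:ℝ) * (-3 + (3:ℝ)^(m + 1) - 2 * (((m+1:ℕ):ℝ) - 1))
        = 3*(((3:ℝ)^m - 2*(m:ℝ) - 1)/4) + (m:ℝ) := by
      push_cast [pow_succ]; ring
    rw [e, Real.rpow_add h5, rpow_triple h5, Real.rpow_natCast]
  rw [hs m, (key m).1, (key m).2.1, (key m).2.2, hy3, hy5]
  simp only [pow_succ]
  field_simp
  ring
end

section
/- Let a, b, c : ℕ → ℝ be the sequences with a₀ = 1, b₀ = 0, c₀ = 0 and a_{n+1} = 3a_n³ + 6a_n²b_n, b_{n+1} = a_n³ + 7a_n²b_n + 7a_n b_n² + a_n²c_n, c_{n+1} = a_n³ + 12a_n²b_n + 36a_n b_n² + 14b_n³ + 3a_n²c_n + 12a_n b_n c_n. Then for every n ≥ 0, a_n = 3^{−1/4 + 3^n/4 + n/2} · 5^{−1/4 + 3^n/4 − n/2}. -/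
noncomputable def apoA (n : ℕ) : ℝ :=
  (3 : ℝ) ^ (-(1 / 4 : ℝ) + (3 : ℝ) ^ n / 4 + (n : ℝ) / 2)
    * (5 : ℝ) ^ (-(1 / 4 : ℝ) + (3 : ℝ) ^ n / 4 - (n : ℝ) / 2)

lemma apoA_succ (n : ℕ) : apoA (n + 1) = apoA n ^ 3 * (3 * (5 / 3 : ℝ) ^ n) := by
  have h3 : (0:ℝ) < 3 := by norm_num
  have h5 : (0:ℝ) < 5 := by norm_num
  unfold apoA
  rw [mul_pow, ← Real.rpow_natCast ((3:ℝ) ^ (-(1 / 4 : ℝ) + (3 : ℝ) ^ n / 4 + (n : ℝ) / 2)) 3,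
    ← Real.rpow_natCast ((5:ℝ) ^ (-(1 / 4 : ℝ) + (3 : ℝ) ^ n / 4 - (n : ℝ) / 2)) 3,
    ← Real.rpow_mul h3.le, ← Real.rpow_mul h5.le]
  have hdiv : ((5:ℝ)/3) ^ n = (5:ℝ) ^ ((n:ℝ)) / (3:ℝ) ^ ((n:ℝ)) := by
    rw [Real.rpow_natCast, Real.rpow_natCast, div_pow]
  have h3one : (3:ℝ) = (3:ℝ) ^ ((1:ℝ)) := (Real.rpow_one 3).symm
  rw [hdiv]
  rw [show (3:ℝ) * ((5:ℝ) ^ ((n:ℝ)) / (3:ℝ) ^ ((n:ℝ)))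
      = (3:ℝ) ^ ((1:ℝ) - (n:ℝ)) * (5:ℝ) ^ ((n:ℝ)) by
    rw [Real.rpow_sub h3, Real.rpow_one]; ring]
  rw [mul_mul_mul_comm, ← Real.rpow_add h3, ← Real.rpow_add h5]
  congr 1
  · congr 1
    push_cast [pow_succ]
    ring
  · congr 1
    push_cast [pow_succ]
    ring

theorem apollonian_a_closed_form
    (a b c : ℕ → ℝ)
    (ha0 : a 0 = 1) (hb0 : b 0 = 0) (hc0 : c 0 = 0)
    (ha : ∀ n, a (n + 1) = 3 * (a n) ^ 3 + 6 * (a n) ^ 2 * b n)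
    (hb : ∀ n, b (n + 1) = (a n) ^ 3 + 7 * (a n) ^ 2 * b n + 7 * a n * (b n) ^ 2 + (a n) ^ 2 * c n)
    (hc : ∀ n, c (n + 1) = (a n) ^ 3 + 12 * (a n) ^ 2 * b n + 36 * a n * (b n) ^ 2 + 14 * (b n) ^ 3
        + 3 * (a n) ^ 2 * c n + 12 * a n * b n * c n) :
    ∀ n : ℕ, a n = (3 : ℝ) ^ (-(1 / 4 : ℝ) + (3 : ℝ) ^ n / 4 + (n : ℝ) / 2)
        * (5 : ℝ) ^ (-(1 / 4 : ℝ) + (3 : ℝ) ^ n / 4 - (n : ℝ) / 2) := by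
  have key : ∀ n : ℕ, a n = apoA n ∧ b n = apoA n * (((5/3:ℝ)^n - 1) / 2)
      ∧ c n = apoA n * (3 * ((5/3:ℝ)^n - 1) ^ 2 / 4) := by
    intro n
    induction n with
    | zero =>
      have : apoA 0 = 1 := by
        unfold apoA
        norm_num
      simp [ha0, hb0, hc0, this]
    | succ n ih =>
      obtain ⟨iha, ihb, ihc⟩ := ih
      refine ⟨?_, ?_, ?_⟩
      · rw [ha n, iha, ihb, apoA_succ]; ring
      · rw [hb n, iha, ihb, ihc, apoA_succ, pow_succ]; ring
      · rw [hc n, iha, ihb, ihc, apoA_succ, pow_succ]; ring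
  intro n
  exact (key n).1
end

section
/- Let a, b, c : ℕ → ℝ be the sequences with a₀ = 1, b₀ = 0, c₀ = 0 and a_{n+1} = 3a_n³ + 6a_n²b_n, b_{n+1} = a_n³ + 7a_n²b_n + 7a_n b_n² + a_n²c_n, c_{n+1} = a_n³ + 12a_n²b_n + 36a_n b_n² + 14b_n³ + 3a_n²c_n + 12a_n b_n c_n. Then for every n ≥ 0, b_n = (1/2) · 15^{(1/4)(−1 + 3^n − 2n)} · (5^n − 3^n). -/
open Real

theorem apollonian_b_closed_form
    (a b c : ℕ → ℝ)
    (ha0 : a 0 = 1) (hb0 : b 0 = 0) (hc0 : c 0 = 0)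
    (ha : ∀ n, a (n + 1) = 3 * (a n) ^ 3 + 6 * (a n) ^ 2 * b n)
    (hb : ∀ n, b (n + 1) = (a n) ^ 3 + 7 * (a n) ^ 2 * b n + 7 * a n * (b n) ^ 2 + (a n) ^ 2 * c n)
    (hc : ∀ n, c (n + 1) = (a n) ^ 3 + 12 * (a n) ^ 2 * b n + 36 * a n * (b n) ^ 2 + 14 * (b n) ^ 3
        + 3 * (a n) ^ 2 * c n + 12 * a n * b n * c n) :
    ∀ n : ℕ, b n = (1 / 2) * (15 : ℝ) ^ ((1 / 4 : ℝ) * (-1 + (3 : ℝ) ^ n - 2 * (n : ℝ)))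
        * ((5 : ℝ) ^ n - (3 : ℝ) ^ n) := by
  have h15 : (0:ℝ) < 15 := by norm_num
  have key : ∀ n : ℕ,
      a n = (3:ℝ)^n * (15:ℝ) ^ (((3:ℝ)^n - 1 - 2*(n:ℝ))/4) ∧
      b n = (15:ℝ) ^ (((3:ℝ)^n - 1 - 2*(n:ℝ))/4) * ((5:ℝ)^n - (3:ℝ)^n) / 2 ∧
      c n = (15:ℝ) ^ (((3:ℝ)^n - 1 - 2*(n:ℝ))/4) * ((5:ℝ)^n - (3:ℝ)^n)^2 * 3 / (4 * (3:ℝ)^n) := by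
    intro n
    induction n with
    | zero => norm_num [ha0, hb0, hc0]
    | succ n ih =>
      obtain ⟨iha, ihb, ihc⟩ := ih
      set E : ℝ := ((3:ℝ)^n - 1 - 2*(n:ℝ))/4 with hE
      have hEsucc : ((3:ℝ)^(n+1) - 1 - 2*((n+1:ℕ):ℝ))/4 = E + E + E + (n:ℝ) := by
        rw [hE]; push_cast [pow_succ]; ring
      have ht : (15:ℝ) ^ (((3:ℝ)^(n+1) - 1 - 2*((n+1:ℕ):ℝ))/4)
          = (15:ℝ)^E * (15:ℝ)^E * (15:ℝ)^E * (15:ℝ)^n := by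
        rw [hEsucc, rpow_add h15, rpow_add h15, rpow_add h15, rpow_natCast]
      have hx3 : ((3:ℝ)^n) ≠ 0 := by positivity
      have h35 : (15:ℝ)^n = (3:ℝ)^n * (5:ℝ)^n := by
        rw [← mul_pow]; norm_num
      refine ⟨?_, ?_, ?_⟩
      · rw [ha n, iha, ihb, ht, h35]; ring
      · rw [hb n, iha, ihb, ihc, ht, h35]
        field_simp
        ring
      · rw [hc n, iha, ihb, ihc, ht, h35]
        field_simp
        ring
  intro n
  rw [(key n).2.1,
    show ((1/4:ℝ) * (-1 + (3:ℝ)^n - 2*(n:ℝ))) = ((3:ℝ)^n - 1 - 2*(n:ℝ))/4 by ring]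
  ring
end

section
/- Let a, b, c : ℕ → ℝ be the sequences with a₀ = 1, b₀ = 0, c₀ = 0 and a_{n+1} = 3a_n³ + 6a_n²b_n, b_{n+1} = a_n³ + 7a_n²b_n + 7a_n b_n² + a_n²c_n, c_{n+1} = a_n³ + 12a_n²b_n + 36a_n b_n² + 14b_n³ + 3a_n²c_n + 12a_n b_n c_n. Then for every n ≥ 0, c_n = (1/4) · 3^{(1/4)(3 + 3^n − 6n)} · 5^{(1/4)(−1 + 3^n − 2n)} · (3^n − 5^n)². -/
noncomputable def apX (n : ℕ) : ℝ := ((3:ℝ)^n + 2*(n:ℝ) - 1)/4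
noncomputable def apY (n : ℕ) : ℝ := ((3:ℝ)^n - 2*(n:ℝ) - 1)/4
noncomputable def apA (n : ℕ) : ℝ := (3:ℝ) ^ apX n * (5:ℝ) ^ apY n

lemma apA_succ (n : ℕ) : apA (n+1) = 3 * (apA n)^3 * ((5:ℝ)/3)^n := by
  have h3 : (0:ℝ) < 3 := by norm_num
  have h5 : (0:ℝ) < 5 := by norm_num
  have e3 : (apA n)^3 = (3:ℝ) ^ (apX n * 3) * (5:ℝ) ^ (apY n * 3) := by
    rw [apA, mul_pow, ← Real.rpow_natCast ((3:ℝ) ^ apX n) 3,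
        ← Real.rpow_natCast ((5:ℝ) ^ apY n) 3,
        ← Real.rpow_mul h3.le, ← Real.rpow_mul h5.le]
    norm_num
  have e53 : ((5:ℝ)/3)^n = (5:ℝ) ^ ((n:ℝ)) * (3:ℝ) ^ (-(n:ℝ)) := by
    rw [div_pow, ← Real.rpow_natCast (5:ℝ) n, ← Real.rpow_natCast (3:ℝ) n,
        Real.rpow_neg h3.le, div_eq_mul_inv]
  have hx : apX (n+1) = apX n * 3 + (1 + -(n:ℝ)) := by
    unfold apX; push_cast [pow_succ]; ring
  have hy : apY (n+1) = apY n * 3 + (n:ℝ) := by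
    unfold apY; push_cast [pow_succ]; ring
  rw [e3, e53, apA, hx, hy, Real.rpow_add h3, Real.rpow_add h5,
      Real.rpow_add h3, Real.rpow_one]
  ring

lemma apConv (n : ℕ) :
    3/4 * apA n * (((5:ℝ)/3)^n - 1)^2
    = (1 / 4) * (3 : ℝ) ^ ((1 / 4 : ℝ) * (3 + (3 : ℝ) ^ n - 6 * (n : ℝ)))
        * (5 : ℝ) ^ ((1 / 4 : ℝ) * (-1 + (3 : ℝ) ^ n - 2 * (n : ℝ)))
        * ((3 : ℝ) ^ n - (5 : ℝ) ^ n) ^ 2 := by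
  have h3 : (0:ℝ) < 3 := by norm_num
  have h3n : (0:ℝ) < (3:ℝ)^n := by positivity
  have hd : ((5:ℝ)/3)^n - 1 = ((5:ℝ)^n - 3^n)/3^n := by
    field_simp [div_pow]
    rw [div_pow, sub_mul, div_mul_cancel₀ _ h3n.ne']; ring
  have hE : (1 / 4 : ℝ) * (3 + (3 : ℝ) ^ n - 6 * (n : ℝ)) = apX n + (1 - 2*(n:ℝ)) := by
    unfold apX; ring
  have hF : (1 / 4 : ℝ) * (-1 + (3 : ℝ) ^ n - 2 * (n : ℝ)) = apY n := by
    unfold apY; ring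
  have key : (3:ℝ) ^ (1 - 2*(n:ℝ)) * ((3:ℝ)^n)^2 = 3 := by
    rw [← pow_mul, ← Real.rpow_natCast (3:ℝ) (n*2), ← Real.rpow_add h3]
    push_cast
    ring_nf
    norm_num
  have h2 : (3:ℝ) ^ (1 - 2*(n:ℝ)) = 3 / ((3:ℝ)^n)^2 := by
    rw [eq_div_iff (by positivity)]; exact key
  rw [hd, div_pow, hE, hF, Real.rpow_add h3, h2, apA]
  field_simp
  ring

theorem apollonian_c_closed_form
    (a b c : ℕ → ℝ)
    (ha0 : a 0 = 1) (hb0 : b 0 = 0) (hc0 : c 0 = 0)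
    (ha : ∀ n, a (n + 1) = 3 * (a n) ^ 3 + 6 * (a n) ^ 2 * b n)
    (hb : ∀ n, b (n + 1) = (a n) ^ 3 + 7 * (a n) ^ 2 * b n + 7 * a n * (b n) ^ 2 + (a n) ^ 2 * c n)
    (hc : ∀ n, c (n + 1) = (a n) ^ 3 + 12 * (a n) ^ 2 * b n + 36 * a n * (b n) ^ 2 + 14 * (b n) ^ 3
        + 3 * (a n) ^ 2 * c n + 12 * a n * b n * c n) :
    ∀ n : ℕ, c n = (1 / 4) * (3 : ℝ) ^ ((1 / 4 : ℝ) * (3 + (3 : ℝ) ^ n - 6 * (n : ℝ)))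
        * (5 : ℝ) ^ ((1 / 4 : ℝ) * (-1 + (3 : ℝ) ^ n - 2 * (n : ℝ)))
        * ((3 : ℝ) ^ n - (5 : ℝ) ^ n) ^ 2 := by
  have hA0 : apA 0 = 1 := by
    unfold apA apX apY; norm_num
  have key : ∀ n, a n = apA n ∧ b n = apA n * (((5:ℝ)/3)^n - 1)/2 ∧
      c n = 3/4 * apA n * (((5:ℝ)/3)^n - 1)^2 := by
    intro n
    induction n with
    | zero =>
      refine ⟨?_, ?_, ?_⟩ <;> simp [ha0, hb0, hc0, hA0]
    | succ n ih =>
      obtain ⟨iha, ihb, ihc⟩ := ih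
      refine ⟨?_, ?_, ?_⟩
      · rw [ha n, iha, ihb, apA_succ]; ring
      · rw [hb n, iha, ihb, ihc, apA_succ, pow_succ]; ring
      · rw [hc n, iha, ihb, ihc, apA_succ, pow_succ]; ring
  intro n
  rw [(key n).2.2, apConv]
end

section
/- Let a, b, c : ℕ → ℝ be the sequences with a₀ = 1, b₀ = 0, c₀ = 0 and a_{n+1} = 3a_n³ + 6a_n²b_n, b_{n+1} = a_n³ + 7a_n²b_n + 7a_n b_n² + a_n²c_n, c_{n+1} = a_n³ + 12a_n²b_n + 36a_n b_n² + 14b_n³ + 3a_n²c_n + 12a_n b_n c_n. Then for every n ≥ 0, a_n · c_n = 3 · b_n². -/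
theorem apollonian_invariant
    (a b c : ℕ → ℝ)
    (ha0 : a 0 = 1) (hb0 : b 0 = 0) (hc0 : c 0 = 0)
    (ha : ∀ n, a (n + 1) = 3 * (a n) ^ 3 + 6 * (a n) ^ 2 * b n)
    (hb : ∀ n, b (n + 1) = (a n) ^ 3 + 7 * (a n) ^ 2 * b n + 7 * a n * (b n) ^ 2 + (a n) ^ 2 * c n)
    (hc : ∀ n, c (n + 1) = (a n) ^ 3 + 12 * (a n) ^ 2 * b n + 36 * a n * (b n) ^ 2 + 14 * (b n) ^ 3
        + 3 * (a n) ^ 2 * c n + 12 * a n * b n * c n) :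
    ∀ n : ℕ, a n * c n = 3 * (b n) ^ 2 := by
  intro n
  induction n with
  | zero => simp [ha0, hb0, hc0]
  | succ n ih =>
      rw [ha n, hb n, hc n]
      linear_combination (3 * (a n)^4 + 12 * (a n)^3 * b n + 21 * (a n)^2 * (b n)^2 - 3 * (a n)^3 * c n) * ih
end

section
/- Let a, b, c : ℕ → ℝ be the sequences with a₀ = 1, b₀ = 0, c₀ = 0 and a_{n+1} = 3a_n³ + 6a_n²b_n, b_{n+1} = a_n³ + 7a_n²b_n + 7a_n b_n² + a_n²c_n, c_{n+1} = a_n³ + 12a_n²b_n + 36a_n b_n² + 14b_n³ + 3a_n²c_n + 12a_n b_n c_n. Then for every n ≥ 0, a_{n+1} = (5^n / 3^{n−1}) · a_n³. -/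
theorem apollonian_a_recursion
    (a b c : ℕ → ℝ)
    (ha0 : a 0 = 1) (hb0 : b 0 = 0) (hc0 : c 0 = 0)
    (ha : ∀ n, a (n + 1) = 3 * (a n) ^ 3 + 6 * (a n) ^ 2 * b n)
    (hb : ∀ n, b (n + 1) = (a n) ^ 3 + 7 * (a n) ^ 2 * b n + 7 * a n * (b n) ^ 2 + (a n) ^ 2 * c n)
    (hc : ∀ n, c (n + 1) = (a n) ^ 3 + 12 * (a n) ^ 2 * b n + 36 * a n * (b n) ^ 2 + 14 * (b n) ^ 3
        + 3 * (a n) ^ 2 * c n + 12 * a n * b n * c n) :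
    ∀ n : ℕ, a (n + 1) = ((5 : ℝ) ^ n / (3 : ℝ) ^ ((n : ℝ) - 1)) * (a n) ^ 3 := by
  have key : ∀ n : ℕ, b n = ((5/3:ℝ)^n - 1)/2 * a n ∧
      c n = 3 * (((5/3:ℝ)^n - 1)/2)^2 * a n := by
    intro n
    induction n with
    | zero => simp [hb0, hc0, ha0]
    | succ n ih =>
      obtain ⟨hbn, hcn⟩ := ih
      constructor
      · rw [hb n, ha n, hbn, hcn]; ring
      · rw [hc n, ha n, hbn, hcn]; ring
  intro n
  have h3 : (3:ℝ) ^ ((n:ℝ) - 1) = 3 ^ n / 3 := by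
    rw [Real.rpow_sub (by norm_num), Real.rpow_one, Real.rpow_natCast]
  rw [ha n, (key n).1, h3, div_pow]
  have h3n : (3:ℝ)^n ≠ 0 := by positivity
  field_simp
  ring
end

section
/- Let a, b, c : ℕ → ℝ be the sequences with a₀ = 1, b₀ = 0, c₀ = 0 and a_{n+1} = 3a_n³ + 6a_n²b_n, b_{n+1} = a_n³ + 7a_n²b_n + 7a_n b_n² + a_n²c_n, c_{n+1} = a_n³ + 12a_n²b_n + 36a_n b_n² + 14b_n³ + 3a_n²c_n + 12a_n b_n c_n, and define w_n = a_{n+1} / a_n³. Then w₀ = 3, w_{n+1} = (5/3) · w_n for all n ≥ 0, and hence w_n = 3 · (5/3)^n for all n ≥ 0. -/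
theorem apollonian_w_sequence
    (a b c : ℕ → ℝ)
    (ha0 : a 0 = 1) (hb0 : b 0 = 0) (hc0 : c 0 = 0)
    (ha : ∀ n, a (n + 1) = 3 * (a n) ^ 3 + 6 * (a n) ^ 2 * b n)
    (hb : ∀ n, b (n + 1) = (a n) ^ 3 + 7 * (a n) ^ 2 * b n + 7 * a n * (b n) ^ 2 + (a n) ^ 2 * c n)
    (hc : ∀ n, c (n + 1) = (a n) ^ 3 + 12 * (a n) ^ 2 * b n + 36 * a n * (b n) ^ 2 + 14 * (b n) ^ 3
        + 3 * (a n) ^ 2 * c n + 12 * a n * b n * c n)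
    (w : ℕ → ℝ)
    (hw : ∀ n, w n = a (n + 1) / (a n) ^ 3) :
    w 0 = 3 ∧ (∀ n : ℕ, w (n + 1) = (5 / 3) * w n) ∧ (∀ n : ℕ, w n = 3 * (5 / 3 : ℝ) ^ n) := by
  have key : ∀ n, 0 < a n ∧ 0 ≤ b n ∧ 0 ≤ c n ∧ a n * c n = 3 * (b n) ^ 2 := by
    intro n
    induction n with
    | zero => simp [ha0, hb0, hc0]
    | succ k ih =>
      obtain ⟨hap, hbp, hcp, hinv⟩ := ih
      refine ⟨?_, ?_, ?_, ?_⟩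
      · rw [ha]; nlinarith [pow_pos hap 3, sq_nonneg (a k)]
      · rw [hb]; nlinarith [pow_pos hap 3, sq_nonneg (a k)]
      · rw [hc]; positivity
      · rw [ha, hb, hc]
        linear_combination (3 * (a k) ^ 4 + 12 * (a k) ^ 3 * b k - 3 * (a k) ^ 3 * c k
          + 21 * (a k) ^ 2 * (b k) ^ 2) * hinv
  have wform : ∀ n, w n = 3 + 6 * (b n / a n) := by
    intro n
    obtain ⟨hap, _, _, _⟩ := key n
    have hne : a n ≠ 0 := ne_of_gt hap
    rw [hw, ha]
    field_simp
  have w0 : w 0 = 3 := by rw [wform, hb0]; simp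
  have wstep : ∀ n, w (n + 1) = (5 / 3) * w n := by
    intro n
    obtain ⟨hap, hbp, hcp, hinv⟩ := key n
    obtain ⟨hap1, _, _, _⟩ := key (n + 1)
    have hne : a n ≠ 0 := ne_of_gt hap
    have hne1 : a (n + 1) ≠ 0 := ne_of_gt hap1
    rw [wform, wform]
    have hkey : 6 * b (n + 1) * a n = (2 * a n + 10 * b n) * a (n + 1) := by
      rw [ha, hb]
      linear_combination 6 * (a n) ^ 2 * hinv
    field_simp
    nlinarith [hkey]
  refine ⟨w0, wstep, ?_⟩
  intro n
  induction n with
  | zero => simpa using w0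
  | succ k ih => rw [wstep, ih]; ring
end

section
/- Let a, b, c : ℕ → ℝ be the sequences with a₀ = 1, b₀ = 0, c₀ = 0 and a_{n+1} = 3a_n³ + 6a_n²b_n, b_{n+1} = a_n³ + 7a_n²b_n + 7a_n b_n² + a_n²c_n, c_{n+1} = a_n³ + 12a_n²b_n + 36a_n b_n² + 14b_n³ + 3a_n²c_n + 12a_n b_n c_n. Then for every n ≥ 0, b_{n+1} / a_{n+1} = −1/2 + 5·a_{n+1} / (18·a_n³). -/
theorem apollonian_b_over_a
    (a b c : ℕ → ℝ)
    (ha0 : a 0 = 1) (hb0 : b 0 = 0) (hc0 : c 0 = 0)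
    (ha : ∀ n, a (n + 1) = 3 * (a n) ^ 3 + 6 * (a n) ^ 2 * b n)
    (hb : ∀ n, b (n + 1) = (a n) ^ 3 + 7 * (a n) ^ 2 * b n + 7 * a n * (b n) ^ 2 + (a n) ^ 2 * c n)
    (hc : ∀ n, c (n + 1) = (a n) ^ 3 + 12 * (a n) ^ 2 * b n + 36 * a n * (b n) ^ 2 + 14 * (b n) ^ 3
        + 3 * (a n) ^ 2 * c n + 12 * a n * b n * c n) :
    ∀ n : ℕ, b (n + 1) / a (n + 1) = -(1 / 2) + 5 * a (n + 1) / (18 * (a n) ^ 3) := by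
  have key : ∀ n : ℕ, 0 < a n ∧ 0 ≤ b n ∧ 0 ≤ c n ∧ a n * c n = 3 * (b n) ^ 2 := by
    intro n
    induction n with
    | zero => simp [ha0, hb0, hc0]
    | succ k ih =>
      obtain ⟨hpa, hpb, hpc, hinv⟩ := ih
      refine ⟨?_, ?_, ?_, ?_⟩
      · rw [ha k]; positivity
      · rw [hb k]; positivity
      · rw [hc k]; positivity
      · rw [ha k, hb k, hc k]
        linear_combination (3 * (a k) ^ 4 + 12 * (a k) ^ 3 * b k + 21 * (a k) ^ 2 * (b k) ^ 2
          - 3 * (a k) ^ 3 * c k) * hinv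
  intro n
  obtain ⟨hpa, hpb, hpc, hinv⟩ := key n
  have hpa1 : 0 < a (n + 1) := (key (n + 1)).1
  rw [ha n, hb n]
  have h1 : (3 * (a n) ^ 3 + 6 * (a n) ^ 2 * b n) ≠ 0 := by rw [← ha n]; exact hpa1.ne'
  have h2 : (18 * (a n) ^ 3) ≠ 0 := by positivity
  field_simp
  linear_combination 36 * hinv
end

section
/- Let a, b, c : ℕ → ℝ be the sequences with a₀ = 1, b₀ = 0, c₀ = 0 and a_{n+1} = 3a_n³ + 6a_n²b_n, b_{n+1} = a_n³ + 7a_n²b_n + 7a_n b_n² + a_n²c_n, c_{n+1} = a_n³ + 12a_n²b_n + 36a_n b_n² + 14b_n³ + 3a_n²c_n + 12a_n b_n c_n. Then for every n ≥ 0, b_{n+1} = a_n³ + 7·a_n²·b_n + 10·a_n·b_n². -/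
theorem apollonian_b_simplified_recursion
    (a b c : ℕ → ℝ)
    (ha0 : a 0 = 1) (hb0 : b 0 = 0) (hc0 : c 0 = 0)
    (ha : ∀ n, a (n + 1) = 3 * (a n) ^ 3 + 6 * (a n) ^ 2 * b n)
    (hb : ∀ n, b (n + 1) = (a n) ^ 3 + 7 * (a n) ^ 2 * b n + 7 * a n * (b n) ^ 2 + (a n) ^ 2 * c n)
    (hc : ∀ n, c (n + 1) = (a n) ^ 3 + 12 * (a n) ^ 2 * b n + 36 * a n * (b n) ^ 2 + 14 * (b n) ^ 3
        + 3 * (a n) ^ 2 * c n + 12 * a n * b n * c n) :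
    ∀ n : ℕ, b (n + 1) = (a n) ^ 3 + 7 * (a n) ^ 2 * b n + 10 * a n * (b n) ^ 2 := by
  have inv : ∀ n, a n * c n = 3 * (b n) ^ 2 := by
    intro n
    induction n with
    | zero => rw [ha0, hb0, hc0]; ring
    | succ k ih =>
      rw [ha k, hb k, hc k]
      linear_combination (3 * (a k) ^ 4 + 12 * (a k) ^ 3 * b k + 21 * (a k) ^ 2 * (b k) ^ 2
        - 3 * (a k) ^ 3 * c k) * ih
  intro n
  rw [hb n]
  linear_combination a n * inv n
end

section
/- Define s : ℕ → ℝ for n ≥ 1 by s_n = (1/4) · 3^{(3/4)(−1 + 3^{n−1} − 2(n−1))} · 5^{(1/4)(−3 + 3^n − 2(n−1))} · (3^n + 5^n)², and let V_n = (3^n + 5)/2. Then the sequence z_n = (ln s_n)/V_n converges, and its limit as n → ∞ equals (ln 15)/2. -/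
open Filter

theorem apollonian_entropy_limit
    (s : ℕ → ℝ)
    (hs : ∀ n : ℕ, 1 ≤ n →
      s n = (1 / 4) * (3 : ℝ) ^ ((3 / 4 : ℝ) * (-1 + (3 : ℝ) ^ (n - 1) - 2 * ((n : ℝ) - 1)))
          * (5 : ℝ) ^ ((1 / 4 : ℝ) * (-3 + (3 : ℝ) ^ n - 2 * ((n : ℝ) - 1)))
          * ((3 : ℝ) ^ n + (5 : ℝ) ^ n) ^ 2)
    (V : ℕ → ℝ)
    (hV : ∀ n : ℕ, V n = ((3 : ℝ) ^ n + 5) / 2) :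
    Tendsto (fun n : ℕ => Real.log (s n) / V n) atTop (nhds (Real.log 15 / 2)) := by
  have h15 : Real.log 15 = Real.log 3 + Real.log 5 := by
    rw [show (15 : ℝ) = 3 * 5 by norm_num, Real.log_mul (by norm_num) (by norm_num)]
  have hgeo : Tendsto (fun n : ℕ => ((1 : ℝ) / 3) ^ n) atTop (nhds 0) :=
    tendsto_pow_atTop_nhds_zero_of_lt_one (by norm_num) (by norm_num)
  have hlin : Tendsto (fun n : ℕ => (n : ℝ) * ((1 : ℝ) / 3) ^ n) atTop (nhds 0) :=
    tendsto_self_mul_const_pow_of_lt_one (by norm_num) (by norm_num)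
  have haux : ∀ n : ℕ, (3 : ℝ) ^ n * ((1 : ℝ) / 3) ^ n = 1 := by
    intro n; rw [← mul_pow]; norm_num
  -- the log term times (1/3)^n tends to zero
  have hlogterm : Tendsto (fun n : ℕ =>
      Real.log ((3 : ℝ) ^ (n + 1) + 5 ^ (n + 1)) * ((1 : ℝ) / 3) ^ n) atTop (nhds 0) := by
    have hg : Tendsto (fun n : ℕ =>
        (Real.log 2 + ((n : ℝ) + 1) * Real.log 5) * ((1 : ℝ) / 3) ^ n) atTop (nhds 0) := by
      have h := (hgeo.const_mul (Real.log 2)).add ((hlin.add hgeo).mul_const (Real.log 5))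
      norm_num at h
      exact h.congr (fun n => by ring)
    apply squeeze_zero (fun n => ?_) (fun n => ?_) hg
    · have h1 : (1 : ℝ) ≤ (3 : ℝ) ^ (n + 1) := one_le_pow₀ (by norm_num)
      have h2 : (0 : ℝ) < (5 : ℝ) ^ (n + 1) := by positivity
      exact mul_nonneg (Real.log_nonneg (by linarith)) (by positivity)
    · apply mul_le_mul_of_nonneg_right ?_ (by positivity)
      have h1 : (3 : ℝ) ^ (n + 1) + 5 ^ (n + 1) ≤ 2 * 5 ^ (n + 1) := by
        have : (3 : ℝ) ^ (n + 1) ≤ 5 ^ (n + 1) :=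
          pow_le_pow_left₀ (by norm_num) (by norm_num) _
        linarith
      calc Real.log ((3 : ℝ) ^ (n + 1) + 5 ^ (n + 1)) ≤ Real.log (2 * 5 ^ (n + 1)) :=
            Real.log_le_log (by positivity) h1
        _ = Real.log 2 + ((n : ℝ) + 1) * Real.log 5 := by
            rw [Real.log_mul (by norm_num) (by positivity), Real.log_pow]; push_cast; ring
  -- explicit form of log (s (n+1)) / V (n+1)
  have heq : ∀ n : ℕ, Real.log (s (n + 1)) / V (n + 1) =
      (Real.log (1 / 4) + (3 / 4) * (-1 + (3 : ℝ) ^ n - 2 * (n : ℝ)) * Real.log 3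
        + (1 / 4) * (-3 + (3 : ℝ) ^ (n + 1) - 2 * (n : ℝ)) * Real.log 5
        + 2 * Real.log ((3 : ℝ) ^ (n + 1) + 5 ^ (n + 1)))
      / (((3 : ℝ) ^ (n + 1) + 5) / 2) := by
    intro n
    rw [hs (n + 1) (Nat.le_add_left 1 n), hV]
    congr 1
    rw [Real.log_mul (by positivity) (by positivity),
      Real.log_mul (by positivity) (by positivity),
      Real.log_mul (by positivity) (by positivity),
      Real.log_rpow (by norm_num), Real.log_rpow (by norm_num), Real.log_pow]
    simp only [Nat.add_sub_cancel]
    push_cast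
    ring
  -- denominator limit
  have hden : Tendsto (fun n : ℕ => (((3 : ℝ) ^ (n + 1) + 5) / 2) * ((1 : ℝ) / 3) ^ n)
      atTop (nhds (3 / 2)) := by
    have h := ((hgeo.const_mul (5:ℝ)).const_add 3).div_const 2
    rw [show ((3:ℝ) + 5 * 0) / 2 = 3 / 2 by norm_num] at h
    refine h.congr (fun n => ?_)
    have h3 : (3 : ℝ) ^ (n + 1) * ((1 : ℝ) / 3) ^ n = 3 := by
      rw [pow_succ]
      rw [show (3:ℝ)^n * 3 * (1/3:ℝ)^n = 3^n * (1/3:ℝ)^n * 3 by ring, haux n]; ring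
    linear_combination (-(1 / 2)) * h3
  -- numerator limit
  have tmid : Tendsto (fun n : ℕ =>
      -((1 : ℝ) / 3) ^ n + 1 - 2 * ((n : ℝ) * ((1 : ℝ) / 3) ^ n)) atTop (nhds 1) := by
    have := (hgeo.neg.add_const 1).sub (hlin.const_mul 2)
    norm_num at this
    exact this
  have tmid5 : Tendsto (fun n : ℕ =>
      -(3 * ((1 : ℝ) / 3) ^ n) + 3 - 2 * ((n : ℝ) * ((1 : ℝ) / 3) ^ n)) atTop (nhds 3) := by
    have := (((hgeo.const_mul 3).neg).add_const 3).sub (hlin.const_mul 2)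
    norm_num at this
    exact this
  have t1 : Tendsto (fun n : ℕ => Real.log (1 / 4) * ((1 : ℝ) / 3) ^ n) atTop (nhds 0) := by
    simpa using hgeo.const_mul (Real.log (1 / 4))
  have t2 := (tmid.const_mul ((3 : ℝ) / 4)).mul_const (Real.log 3)
  have t3 := (tmid5.const_mul ((1 : ℝ) / 4)).mul_const (Real.log 5)
  have t4 := hlogterm.const_mul (2 : ℝ)
  have hnum : Tendsto (fun n : ℕ =>
      (Real.log (1 / 4) + (3 / 4) * (-1 + (3 : ℝ) ^ n - 2 * (n : ℝ)) * Real.log 3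
        + (1 / 4) * (-3 + (3 : ℝ) ^ (n + 1) - 2 * (n : ℝ)) * Real.log 5
        + 2 * Real.log ((3 : ℝ) ^ (n + 1) + 5 ^ (n + 1))) * ((1 : ℝ) / 3) ^ n)
      atTop (nhds (3 / 4 * Real.log 3 + 3 / 4 * Real.log 5)) := by
    have total := ((t1.add t2).add t3).add t4
    rw [show (3 / 4 * Real.log 3 + 3 / 4 * Real.log 5)
      = 0 + 3 / 4 * 1 * Real.log 3 + 1 / 4 * 3 * Real.log 5 + 2 * 0 by ring]
    refine total.congr (fun n => ?_)
    have h3 : (3 : ℝ) ^ (n + 1) * ((1 : ℝ) / 3) ^ n = 3 := by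
      rw [pow_succ]
      rw [show (3:ℝ)^n * 3 * (1/3:ℝ)^n = 3^n * (1/3:ℝ)^n * 3 by ring, haux n]; ring
    linear_combination (-(3 / 4) * Real.log 3) * haux n + (-(1 / 4) * Real.log 5) * h3
  have key : Tendsto (fun n : ℕ => Real.log (s (n + 1)) / V (n + 1)) atTop
      (nhds (Real.log 15 / 2)) := by
    have hdiv := hnum.div hden (by norm_num : (3 / 2 : ℝ) ≠ 0)
    have hval : (3 / 4 * Real.log 3 + 3 / 4 * Real.log 5) / (3 / 2) = Real.log 15 / 2 := by
      rw [h15]; ring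
    rw [hval] at hdiv
    refine Tendsto.congr (fun n => ?_) hdiv
    simp only [Pi.div_apply]
    rw [mul_div_mul_right _ _ (by positivity : ((1 : ℝ) / 3) ^ n ≠ 0), heq n]
  exact (tendsto_add_atTop_iff_nat 1).mp key
end

section
/- Let a, b, c : ℕ → ℝ be the sequences with a₀ = 1, b₀ = 0, c₀ = 0 and a_{n+1} = 3a_n³ + 6a_n²b_n, b_{n+1} = a_n³ + 7a_n²b_n + 7a_n b_n² + a_n²c_n, c_{n+1} = a_n³ + 12a_n²b_n + 36a_n b_n² + 14b_n³ + 3a_n²c_n + 12a_n b_n c_n. Then for every n ≥ 0, a_{n+2} / a_{n+1}³ = (5/3) · (a_{n+1} / a_n³). -/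
theorem apollonian_w_recursion
    (a b c : ℕ → ℝ)
    (ha0 : a 0 = 1) (hb0 : b 0 = 0) (hc0 : c 0 = 0)
    (ha : ∀ n, a (n + 1) = 3 * (a n) ^ 3 + 6 * (a n) ^ 2 * b n)
    (hb : ∀ n, b (n + 1) = (a n) ^ 3 + 7 * (a n) ^ 2 * b n + 7 * a n * (b n) ^ 2 + (a n) ^ 2 * c n)
    (hc : ∀ n, c (n + 1) = (a n) ^ 3 + 12 * (a n) ^ 2 * b n + 36 * a n * (b n) ^ 2 + 14 * (b n) ^ 3
        + 3 * (a n) ^ 2 * c n + 12 * a n * b n * c n) :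
    ∀ n : ℕ, a (n + 2) / (a (n + 1)) ^ 3 = (5 / 3) * (a (n + 1) / (a n) ^ 3) := by
  have pos : ∀ n, 0 < a n ∧ 0 ≤ b n ∧ 0 ≤ c n := by
    intro n
    induction n with
    | zero => simp [ha0, hb0, hc0]
    | succ k ih =>
      obtain ⟨h1, h2, h3⟩ := ih
      refine ⟨?_, ?_, ?_⟩
      · rw [ha]; positivity
      · rw [hb]; positivity
      · rw [hc]; positivity
  have inv : ∀ n, a n * c n = 3 * (b n) ^ 2 := by
    intro n
    induction n with
    | zero => simp [ha0, hb0, hc0]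
    | succ k ih =>
      rw [ha, hb, hc]
      linear_combination (3 * (a k) ^ 4 + 12 * (a k) ^ 3 * b k + 21 * (a k) ^ 2 * (b k) ^ 2
        - 3 * (a k) ^ 3 * c k) * ih
  intro n
  have h0 : (0:ℝ) < a n := (pos n).1
  have h1 : (0:ℝ) < a (n + 1) := (pos (n + 1)).1
  have key : 3 * (a n) ^ 3 * a (n + 2) = 5 * (a (n + 1)) ^ 4 := by
    have e1 := ha n
    have e2 := hb n
    have e3 := ha (n + 1)
    rw [e1, e2] at e3
    rw [e3, e1]
    linear_combination (162 * (a n) ^ 10 + 648 * (a n) ^ 9 * b n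
      + 648 * (a n) ^ 8 * (b n) ^ 2) * inv n
  field_simp
  nlinarith [key, pow_pos h0 3, pow_pos h1 3, sq_nonneg (a n), sq_nonneg (a (n+1))]
end

section
/- Let a, b, c : ℕ → ℝ be the sequences with a₀ = 1, b₀ = 0, c₀ = 0 and a_{n+1} = 3a_n³ + 6a_n²b_n, b_{n+1} = a_n³ + 7a_n²b_n + 7a_n b_n² + a_n²c_n, c_{n+1} = a_n³ + 12a_n²b_n + 36a_n b_n² + 14b_n³ + 3a_n²c_n + 12a_n b_n c_n. Then for every n ≥ 0, b_{n+1} / a_n³ = 1 + 7·(b_n / a_n) + 10·(b_n / a_n)². -/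
theorem apollonian_b_quotient_recursion
    (a b c : ℕ → ℝ)
    (ha0 : a 0 = 1) (hb0 : b 0 = 0) (hc0 : c 0 = 0)
    (ha : ∀ n, a (n + 1) = 3 * (a n) ^ 3 + 6 * (a n) ^ 2 * b n)
    (hb : ∀ n, b (n + 1) = (a n) ^ 3 + 7 * (a n) ^ 2 * b n + 7 * a n * (b n) ^ 2 + (a n) ^ 2 * c n)
    (hc : ∀ n, c (n + 1) = (a n) ^ 3 + 12 * (a n) ^ 2 * b n + 36 * a n * (b n) ^ 2 + 14 * (b n) ^ 3
        + 3 * (a n) ^ 2 * c n + 12 * a n * b n * c n) :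
    ∀ n : ℕ, b (n + 1) / (a n) ^ 3 = 1 + 7 * (b n / a n) + 10 * (b n / a n) ^ 2 := by
  have key : ∀ n, 0 < a n ∧ 0 ≤ b n ∧ 0 ≤ c n ∧ a n * c n = 3 * (b n) ^ 2 := by
    intro n
    induction n with
    | zero => simp [ha0, hb0, hc0]
    | succ n ih =>
      obtain ⟨hpa, hpb, hpc, hinv⟩ := ih
      refine ⟨?_, ?_, ?_, ?_⟩
      · rw [ha]; positivity
      · rw [hb]; positivity
      · rw [hc]; positivity
      · rw [ha, hb, hc]
        linear_combination (3*(a n)^4 + 12*(a n)^3*b n + 21*(a n)^2*(b n)^2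
          - 3*(a n)^2*(a n * c n)) * hinv
  intro n
  obtain ⟨hpa, hpb, hpc, hinv⟩ := key n
  have hane : a n ≠ 0 := ne_of_gt hpa
  rw [hb]
  field_simp
  linear_combination hinv
end
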